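/- Let (Ω, μ) be a probability space, let r be a positive natural number, let ι be a type, and let h : ι → Ω → (Fin r → ZMod 2) be a family of random variables that are mutually independent, with each h j uniformly distributed on Fin r → ZMod 2 (each of the 2^r values attained with probability (1/2)^r). Then for every finite set S ⊆ ι and every a ∈ ι with S ≠ {a}, the probability that the checksum collision Σ_{j ∈ S} h j = h a occurs is exactly (1/2)^r: μ {ω | Σ_{j ∈ S} h j ω = h a ω} = (1/2)^r. -/

import Mathlib

open MeasureTheory ProbabilityTheory
open scoped ENNReal

private lemma ennreal_squeeze {a b x y : ℝ≥0∞} (hx : x ≤ a) (hy : y ≤ b)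
    (hxy : 1 ≤ x + y) (hab : a + b = 1) : x = a := by
  have hb1 : b ≤ 1 := by rw [← hab]; exact le_add_self
  have hbtop : b ≠ ∞ := (hb1.trans_lt (by norm_num)).ne
  have ha : a = 1 - b := by rw [← hab, ENNReal.add_sub_cancel_right hbtop]
  have h1 : (1:ℝ≥0∞) ≤ x + b := hxy.trans (add_le_add le_rfl hy)
  refine le_antisymm hx ?_
  rw [ha]
  exact tsub_le_iff_right.mpr h1

private lemma measure_biUnion_filter {Ω : Type*} [MeasurableSpace Ω] (μ : Measure Ω)
    [IsProbabilityMeasure μ] {κ : Type*} [Fintype κ] (C : κ → Set Ω)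
    (hcov : ∀ ω, ∃ k, ω ∈ C k) (hsum : ∑ k, μ (C k) = 1)
    (P : κ → Prop) [DecidablePred P] :
    μ (⋃ k ∈ Finset.univ.filter P, C k) = ∑ k ∈ Finset.univ.filter P, μ (C k) := by
  classical
  have hA : μ (⋃ k ∈ Finset.univ.filter P, C k) ≤ ∑ k ∈ Finset.univ.filter P, μ (C k) :=
    measure_biUnion_finset_le _ _
  have hB : μ (⋃ k ∈ Finset.univ.filter (fun k => ¬ P k), C k)
      ≤ ∑ k ∈ Finset.univ.filter (fun k => ¬ P k), μ (C k) :=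
    measure_biUnion_finset_le _ _
  have hcover : (Set.univ : Set Ω) ⊆
      (⋃ k ∈ Finset.univ.filter P, C k) ∪ (⋃ k ∈ Finset.univ.filter (fun k => ¬ P k), C k) := by
    intro ω _
    obtain ⟨k, hk⟩ := hcov ω
    by_cases hP : P k
    · exact Or.inl (Set.mem_iUnion₂.mpr ⟨k, by simp [hP], hk⟩)
    · exact Or.inr (Set.mem_iUnion₂.mpr ⟨k, by simp [hP], hk⟩)
  have h1 : (1:ℝ≥0∞) ≤ μ (⋃ k ∈ Finset.univ.filter P, C k)
      + μ (⋃ k ∈ Finset.univ.filter (fun k => ¬ P k), C k) := by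
    calc (1:ℝ≥0∞) = μ Set.univ := (measure_univ).symm
    _ ≤ μ ((⋃ k ∈ Finset.univ.filter P, C k) ∪ (⋃ k ∈ Finset.univ.filter (fun k => ¬ P k), C k)) :=
      measure_mono hcover
    _ ≤ _ := measure_union_le _ _
  have hab : ∑ k ∈ Finset.univ.filter P, μ (C k)
      + ∑ k ∈ Finset.univ.filter (fun k => ¬ P k), μ (C k) = 1 := by
    rw [Finset.sum_filter_add_sum_filter_not]; exact hsum
  exact ennreal_squeeze hA hB h1 hab

private lemma sum_unif {Ω : Type*} [MeasurableSpace Ω] (μ : Measure Ω) [IsProbabilityMeasure μ]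
    {r : ℕ} {ι : Type*} (h : ι → Ω → (Fin r → ZMod 2))
    (hindep : iIndepFun h μ)
    (hunif : ∀ j (v : Fin r → ZMod 2), μ {ω | h j ω = v} = (1 / 2 : ℝ≥0∞) ^ r)
    (T : Finset ι) (hT : T.Nonempty) (v : Fin r → ZMod 2) :
    μ {ω | (∑ j ∈ T, h j ω) = v} = (1 / 2 : ℝ≥0∞) ^ r := by
  classical
  have h21 : (2:ℝ≥0∞) * (1/2) = 1 := by
    rw [one_div, ENNReal.mul_inv_cancel] <;> norm_num
  have h2p : (2:ℝ≥0∞) ^ r * (1/2:ℝ≥0∞) ^ r = 1 := by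
    rw [← mul_pow, h21, one_pow]
  set C : ({x // x ∈ T} → (Fin r → ZMod 2)) → Set Ω :=
    fun g => {ω | ∀ j : {x // x ∈ T}, h j ω = g j} with hCdef
  have hcov : ∀ ω, ∃ g, ω ∈ C g := fun ω => ⟨fun j => h j ω, fun j => rfl⟩
  have hC : ∀ g, μ (C g) = ((1/2:ℝ≥0∞) ^ r) ^ T.card := by
    intro g
    set f : ι → Set Ω := fun j => if hj : j ∈ T then (h j) ⁻¹' {g ⟨j, hj⟩} else Set.univ with hf
    have hCf : C g = ⋂ j ∈ T, f j := by
      ext ω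
      simp only [hCdef, Set.mem_setOf_eq, Set.mem_iInter]
      constructor
      · intro hg j hj
        simp [hf, dif_pos hj, hg ⟨j, hj⟩]
      · intro hg j
        have := hg j j.2
        simpa [hf, dif_pos j.2] using this
    rw [hCf, hindep.meas_biInter (fun j hj => ?_)]
    · rw [Finset.prod_congr rfl (fun j hj => ?_), Finset.prod_const]
      show μ (f j) = (1/2:ℝ≥0∞) ^ r
      rw [hf]
      simp only [dif_pos hj]
      exact hunif j (g ⟨j, hj⟩)
    · rw [hf]
      simp only [dif_pos hj]
      exact ⟨{g ⟨j, hj⟩}, measurableSet_singleton _, rfl⟩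
  have hcardκ : Fintype.card ({x // x ∈ T} → (Fin r → ZMod 2)) = (2 ^ r) ^ T.card := by
    rw [Fintype.card_fun]
    simp
  have hsum : ∑ g, μ (C g) = 1 := by
    rw [Finset.sum_congr rfl (fun g _ => hC g), Finset.sum_const, Finset.card_univ, hcardκ,
      nsmul_eq_mul]
    push_cast
    rw [← mul_pow, ← mul_pow, h21, one_pow, one_pow]
  set P : ({x // x ∈ T} → (Fin r → ZMod 2)) → Prop := fun g => ∑ j, g j = v with hPdef
  have hEv : {ω | (∑ j ∈ T, h j ω) = v} = ⋃ g ∈ Finset.univ.filter P, C g := by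
    ext ω
    simp only [Set.mem_setOf_eq, Set.mem_iUnion, Finset.mem_filter, Finset.mem_univ, true_and,
      hPdef, hCdef]
    constructor
    · intro hv
      refine ⟨fun j => h j ω, ?_, fun j => rfl⟩
      show ∑ j : {x // x ∈ T}, h j ω = v
      rw [Finset.sum_coe_sort T (fun x => h x ω)]
      exact hv
    · rintro ⟨g, hg, hω⟩
      have h1 : ∑ j ∈ T, h j ω = ∑ j : {x // x ∈ T}, h j ω :=
        (Finset.sum_coe_sort T (fun j => h j ω)).symm
      have h2 : ∑ j : {x // x ∈ T}, h j ω = ∑ j : {x // x ∈ T}, g j :=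
        Finset.sum_congr rfl (fun j _ => hω j)
      rw [h1, h2]; exact hg
  -- counting
  obtain ⟨i, hiT⟩ := hT
  have hfib : ∀ u : Fin r → ZMod 2,
      (Finset.univ.filter (fun g : {x // x ∈ T} → (Fin r → ZMod 2) => ∑ j, g j = u)).card
      = (Finset.univ.filter P).card := by
    intro u
    refine Finset.card_nbij' (fun g => g + Pi.single ⟨i, hiT⟩ (v - u))
      (fun g => g + Pi.single ⟨i, hiT⟩ (u - v)) ?_ ?_ ?_ ?_
    · intro g hg
      simp only [Finset.mem_coe, Finset.mem_filter, Finset.mem_univ, true_and, hPdef] at hg ⊢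
      simp only [Pi.add_apply]
      rw [Finset.sum_add_distrib, hg, Finset.sum_pi_single']
      simp only [Finset.mem_univ, if_true]
      abel
    · intro g hg
      simp only [Finset.mem_coe, Finset.mem_filter, Finset.mem_univ, true_and, hPdef] at hg ⊢
      simp only [Pi.add_apply]
      rw [Finset.sum_add_distrib, hg, Finset.sum_pi_single']
      simp only [Finset.mem_univ, if_true]
      abel
    · intro g hg
      show g + Pi.single ⟨i, hiT⟩ (v - u) + Pi.single ⟨i, hiT⟩ (u - v) = g
      rw [add_assoc, ← Pi.single_add]
      simp
    · intro g hg
      show g + Pi.single ⟨i, hiT⟩ (u - v) + Pi.single ⟨i, hiT⟩ (v - u) = g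
      rw [add_assoc, ← Pi.single_add]
      simp
  have htot : Fintype.card ({x // x ∈ T} → (Fin r → ZMod 2))
      = ∑ u : Fin r → ZMod 2,
        (Finset.univ.filter (fun g : {x // x ∈ T} → (Fin r → ZMod 2) => ∑ j, g j = u)).card := by
    rw [← Finset.card_univ]
    exact Finset.card_eq_sum_card_fiberwise
      (f := fun g : {x // x ∈ T} → (Fin r → ZMod 2) => ∑ j : {x // x ∈ T}, g j)
      (fun g _ => Finset.mem_univ _)
  have hcount : (Finset.univ.filter P).card * 2 ^ r = (2 ^ r) ^ T.card := by
    have := htot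
    rw [Finset.sum_congr rfl (fun u _ => hfib u), Finset.sum_const, Finset.card_univ,
      smul_eq_mul, hcardκ] at this
    have hcV : Fintype.card (Fin r → ZMod 2) = 2 ^ r := by simp
    rw [hcV] at this
    rw [this, Nat.mul_comm]
  -- conclusion
  rw [hEv, measure_biUnion_filter μ C hcov hsum P,
    Finset.sum_congr rfl (fun g _ => hC g), Finset.sum_const, nsmul_eq_mul]
  have hcast : ((Finset.univ.filter P).card : ℝ≥0∞) * (2:ℝ≥0∞) ^ r
      = ((2:ℝ≥0∞) ^ r) ^ T.card := by
    exact_mod_cast congrArg (Nat.cast : ℕ → ℝ≥0∞) hcount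
  calc ((Finset.univ.filter P).card : ℝ≥0∞) * ((1/2:ℝ≥0∞) ^ r) ^ T.card
      = ((Finset.univ.filter P).card : ℝ≥0∞) * ((1/2:ℝ≥0∞) ^ r) ^ T.card
        * ((2:ℝ≥0∞) ^ r * (1/2:ℝ≥0∞) ^ r) := by rw [h2p, mul_one]
    _ = (((Finset.univ.filter P).card : ℝ≥0∞) * (2:ℝ≥0∞) ^ r) * ((1/2:ℝ≥0∞) ^ r) ^ T.card
        * (1/2:ℝ≥0∞) ^ r := by ring
    _ = ((2:ℝ≥0∞) ^ r) ^ T.card * ((1/2:ℝ≥0∞) ^ r) ^ T.card * (1/2:ℝ≥0∞) ^ r := by rw [hcast]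
    _ = (((2:ℝ≥0∞) ^ r) * (1/2:ℝ≥0∞) ^ r) ^ T.card * (1/2:ℝ≥0∞) ^ r := by rw [mul_pow]
    _ = (1/2:ℝ≥0∞) ^ r := by rw [h2p, one_pow, one_mul]

theorem checksum_collision_prob
    {Ω : Type*} [MeasurableSpace Ω] (μ : Measure Ω) [IsProbabilityMeasure μ]
    {r : ℕ} (hr : 0 < r) {ι : Type*} (h : ι → Ω → (Fin r → ZMod 2))
    (hindep : iIndepFun h μ)
    (hunif : ∀ j (v : Fin r → ZMod 2), μ {ω | h j ω = v} = (1 / 2 : ℝ≥0∞) ^ r)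
    (S : Finset ι) (a : ι) (hSa : S ≠ {a}) :
    μ {ω | (∑ j ∈ S, h j ω) = h a ω} = (1 / 2 : ℝ≥0∞) ^ r := by
  classical
  have hchar : ∀ x : Fin r → ZMod 2, x + x = 0 := by
    intro x
    funext k
    have : ∀ z : ZMod 2, z + z = 0 := by decide
    exact this (x k)
  by_cases haS : a ∈ S
  · have hT : (S.erase a).Nonempty := by
      rcases Finset.eq_empty_or_nonempty (S.erase a) with he | hne
      · exfalso
        apply hSa
        apply Finset.eq_singleton_iff_unique_mem.mpr ⟨haS, fun x hx => ?_⟩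
        by_contra hxa
        exact (Finset.notMem_empty x) (he ▸ Finset.mem_erase.mpr ⟨hxa, hx⟩)
      · exact hne
    have hev : {ω | (∑ j ∈ S, h j ω) = h a ω}
        = {ω | (∑ j ∈ S.erase a, h j ω) = (0 : Fin r → ZMod 2)} := by
      ext ω
      simp only [Set.mem_setOf_eq]
      rw [← Finset.sum_erase_add S _ haS, add_eq_right]
    rw [hev]
    exact sum_unif μ h hindep hunif _ hT 0
  · have hT : (insert a S).Nonempty := ⟨a, Finset.mem_insert_self a S⟩
    have hev : {ω | (∑ j ∈ S, h j ω) = h a ω}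
        = {ω | (∑ j ∈ insert a S, h j ω) = (0 : Fin r → ZMod 2)} := by
      ext ω
      simp only [Set.mem_setOf_eq, Finset.sum_insert haS]
      constructor
      · intro he
        rw [he]
        exact hchar _
      · intro he
        exact (eq_neg_of_add_eq_zero_right he).trans
          (neg_eq_of_add_eq_zero_left (hchar _))
    rw [hev]
    exact sum_unif μ h hindep hunif _ hT 0
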